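/- Bias of gradient clipping: there exists a random vector g in R² with ‖E[g]‖ = 0 such that ‖E[clip_1(g)]‖ > 0; concretely, if g takes value (18x, 18) with probability 0.1 and (−2x, −2) with probability 0.9 where x is uniform on [0,1] (independent), then E[g] = 0 but E[clip_1(g)] ≠ 0. -/

import Mathlib

open MeasureTheory

/-- Clipping to the unit ball in ℝ². -/
noncomputable def clip1 (v : EuclideanSpace ℝ (Fin 2)) : EuclideanSpace ℝ (Fin 2) :=
  (min 1 (1 / ‖v‖)) • v

/-- Gradient when the error is +9 (value (18x, 18)). -/
noncomputable def g₁ (x : ℝ) : EuclideanSpace ℝ (Fin 2) :=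
  (EuclideanSpace.equiv (Fin 2) ℝ).symm ![18 * x, 18]

/-- Gradient when the error is −1 (value (−2x, −2)). -/
noncomputable def g₂ (x : ℝ) : EuclideanSpace ℝ (Fin 2) :=
  (EuclideanSpace.equiv (Fin 2) ℝ).symm ![-2 * x, -2]

lemma norm_g₁ (x : ℝ) : ‖g₁ x‖ = 18 * Real.sqrt (x^2+1) := by
  rw [EuclideanSpace.norm_eq]
  simp only [g₁, Fin.sum_univ_two]
  norm_num
  rw [show (18*|x|)^2 + 324 = 18^2*(x^2+1) by rw [mul_pow, sq_abs]; ring,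
    Real.sqrt_mul (by positivity), Real.sqrt_sq (by norm_num : (0:ℝ) ≤ 18)]

lemma norm_g₂ (x : ℝ) : ‖g₂ x‖ = 2 * Real.sqrt (x^2+1) := by
  rw [EuclideanSpace.norm_eq]
  simp only [g₂, Fin.sum_univ_two]
  norm_num
  rw [show (2*|x|)^2 + 4 = 2^2*(x^2+1) by rw [mul_pow, sq_abs]; ring,
    Real.sqrt_mul (by positivity), Real.sqrt_sq (by norm_num : (0:ℝ) ≤ 2)]

lemma sqrt_pos' (x : ℝ) : 0 < Real.sqrt (x^2+1) := Real.sqrt_pos.2 (by positivity)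

lemma one_le_sqrt' (x : ℝ) : 1 ≤ Real.sqrt (x^2+1) := by
  nlinarith [Real.sq_sqrt (by positivity : (0:ℝ) ≤ x^2+1), sqrt_pos' x]

lemma coord (x : ℝ) :
    ((0.1:ℝ) • clip1 (g₁ x) + (0.9:ℝ) • clip1 (g₂ x)) (1:Fin 2)
      = -0.8 / Real.sqrt (x^2+1) := by
  have hs := sqrt_pos' x
  have h1 := one_le_sqrt' x
  have m1 : min 1 (1 / ‖g₁ x‖) = 1 / (18 * Real.sqrt (x^2+1)) := by
    rw [norm_g₁, min_eq_right]
    rw [div_le_one (by positivity)]; nlinarith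
  have m2 : min 1 (1 / ‖g₂ x‖) = 1 / (2 * Real.sqrt (x^2+1)) := by
    rw [norm_g₂, min_eq_right]
    rw [div_le_one (by positivity)]; nlinarith
  have e1 : clip1 (g₁ x) = (1/(18*Real.sqrt (x^2+1))) • g₁ x := by rw [clip1, m1]
  have e2 : clip1 (g₂ x) = (1/(2*Real.sqrt (x^2+1))) • g₂ x := by rw [clip1, m2]
  rw [e1, e2]
  simp only [PiLp.add_apply, PiLp.smul_apply, g₁, g₂, smul_eq_mul]
  norm_num
  field_simp
  ring

lemma contF : Continuous fun x : ℝ => (0.1:ℝ) • clip1 (g₁ x) + (0.9:ℝ) • clip1 (g₂ x) := by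
  have hg₁ : Continuous g₁ := by
    exact (EuclideanSpace.equiv (Fin 2) ℝ).symm.continuous.comp
      (continuous_pi fun i => by fin_cases i <;> simp <;> fun_prop)
  have hg₂ : Continuous g₂ := by
    exact (EuclideanSpace.equiv (Fin 2) ℝ).symm.continuous.comp
      (continuous_pi fun i => by fin_cases i <;> simp <;> fun_prop)
  have c1 : Continuous fun x => clip1 (g₁ x) := by
    apply Continuous.fun_smul _ hg₁
    apply continuous_const.min
    apply continuous_const.div hg₁.norm
    intro x; rw [norm_g₁]; positivity
  have c2 : Continuous fun x => clip1 (g₂ x) := by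
    apply Continuous.fun_smul _ hg₂
    apply continuous_const.min
    apply continuous_const.div hg₂.norm
    intro x; rw [norm_g₂]; positivity
  exact (c1.fun_const_smul _).fun_add (c2.fun_const_smul _)

theorem gradient_clipping_bias :
    (∫ x in Set.Icc (0 : ℝ) 1, ((0.1 : ℝ) • g₁ x + (0.9 : ℝ) • g₂ x)) = 0 ∧
    (∫ x in Set.Icc (0 : ℝ) 1, ((0.1 : ℝ) • clip1 (g₁ x) + (0.9 : ℝ) • clip1 (g₂ x))) ≠ 0 := by
  constructor
  · have hz : ∀ x : ℝ, (0.1 : ℝ) • g₁ x + (0.9 : ℝ) • g₂ x = 0 := by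
      intro x; ext i; fin_cases i <;> simp [g₁, g₂] <;> ring
    simp only [hz, integral_zero]
  · intro h
    set F := fun x : ℝ => (0.1:ℝ) • clip1 (g₁ x) + (0.9:ℝ) • clip1 (g₂ x) with hF
    have hint : IntegrableOn F (Set.Icc (0:ℝ) 1) := contF.integrableOn_Icc
    have h2 : (∫ x in Set.Icc (0:ℝ) 1, (EuclideanSpace.proj (1:Fin 2)) (F x)) = 0 := by
      rw [ContinuousLinearMap.integral_comp_comm _ hint, h, map_zero]
    have heq : (∫ x in Set.Icc (0:ℝ) 1, (EuclideanSpace.proj (1:Fin 2)) (F x))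
        = ∫ x in Set.Icc (0:ℝ) 1, (-0.8 / Real.sqrt (x^2+1)) := by
      apply integral_congr_ae
      filter_upwards with x
      simp only [PiLp.proj_apply, hF]
      exact coord x
    have h3 := heq ▸ h2
    have h4 : (∫ x in Set.Icc (0:ℝ) 1, (-0.8 / Real.sqrt (x^2+1))) < 0 := by
      rw [integral_Icc_eq_integral_Ioc,
        ← intervalIntegral.integral_of_le (by norm_num : (0:ℝ) ≤ 1)]
      have hc : Continuous fun x : ℝ => 0.8 / Real.sqrt (x^2+1) := by
        apply continuous_const.div
        · fun_prop
        · intro x; exact (sqrt_pos' x).ne'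
      have hpos : (0:ℝ) < ∫ x in (0:ℝ)..1, 0.8 / Real.sqrt (x^2+1) :=
        intervalIntegral.intervalIntegral_pos_of_pos (hc.intervalIntegrable 0 1)
          (fun x => by positivity) (by norm_num)
      have : ∀ x : ℝ, -0.8 / Real.sqrt (x^2+1) = -(0.8 / Real.sqrt (x^2+1)) := by
        intro x; ring
      simp only [this, intervalIntegral.integral_neg]
      linarith
    exact absurd h3 h4.ne
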